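/- Let L be a first-order language with no function or constant symbols and finitely many relation symbols. Let K be a Fraïssé class of finite L-structures all of whose members are rigid, and suppose in addition that any two 2-element members of K are isomorphic. Let M be the Fraïssé limit of K. Then at least one of the following holds: (a) there exists a strict linear order on M preserved by every L-automorphism of M; or (b) there exist A, B ∈ K with |A| = 2 and |B| = 3 such that for every C ∈ K there is a 2-coloring of the set of L-embeddings of A into C with the property that for every L-embedding g : B → C there exist L-embeddings f₁, f₂ : A → C whose ranges are contained in the range of g and which receive different colors. -/

import Mathlib

open FirstOrder FirstOrder.Language CategoryTheory

universe u v w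

/-- Two embeddings of a finite rigid structure with the same range (in a relational language)
are equal. -/
lemma emb_eq_of_range_subset {L : FirstOrder.Language.{u, v}} [L.IsRelational]
    {A : Type*} {M : Type*} [L.Structure A] [L.Structure M] [Finite A]
    (hA : ∀ e : A ≃[L] A, ∀ x : A, e x = x)
    (f g : A ↪[L] M) (h : ∀ a : A, f a ∈ Set.range g) : f = g := by
  classical
  choose e₀ he₀ using h
  have hinj : Function.Injective e₀ := fun a b hab =>
    f.injective (by rw [← he₀, ← he₀, hab])
  have hbij := Finite.injective_iff_bijective.mp hinj
  let e : A ≃[L] A :=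
    { toEquiv := Equiv.ofBijective e₀ hbij
      map_fun' := fun {n} F _ => isEmptyElim F
      map_rel' := fun {n} r v => by
        have h1 : Structure.RelMap r (⇑g ∘ (e₀ ∘ v)) ↔ Structure.RelMap r (e₀ ∘ v) :=
          g.map_rel r (e₀ ∘ v)
        have h2 : ⇑g ∘ (e₀ ∘ v) = ⇑f ∘ v := funext fun i => he₀ (v i)
        have h3 : Structure.RelMap r (⇑f ∘ v) ↔ Structure.RelMap r v := f.map_rel r v
        show Structure.RelMap r (e₀ ∘ v) ↔ Structure.RelMap r v
        rw [← h3, ← h2]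
        exact h1.symm }
  ext a
  have hea : e a = a := hA e a
  have : e₀ a = a := hea
  rw [← he₀ a, this]

/-- As in Statement 0, but when `K` has a unique `2`-element structure up to
isomorphism, the failure of the Ramsey property can be witnessed with `|A| = 2` and `|B| = 3`. -/
theorem stmt1 {L : FirstOrder.Language.{u, v}} [L.IsRelational]
    [Finite (Σ n, L.Relations n)]
    (K : Set (Bundled.{w} L.Structure))
    (hK : IsFraisse K)
    (hfin : ∀ A ∈ K, Finite A)
    (hrigid : ∀ A ∈ K, ∀ e : A ≃[L] A, ∀ x : A, e x = x)
    (h2iso : ∀ A ∈ K, ∀ B ∈ K, Nat.card A = 2 → Nat.card B = 2 → Nonempty (A ≃[L] B))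
    (M : Type w) [L.Structure M] [Countable M]
    (hM : IsFraisseLimit K M) :
    (∃ lt : M → M → Prop, IsStrictTotalOrder M lt ∧
        ∀ (g : M ≃[L] M) (x y : M), lt x y → lt (g x) (g y)) ∨
    (∃ A ∈ K, ∃ B ∈ K, Nat.card A = 2 ∧ Nat.card B = 3 ∧
      ∀ C ∈ K, ∃ c : (A ↪[L] C) → Bool,
        ∀ g : B ↪[L] C, ∃ f₁ f₂ : A ↪[L] C,
          Set.range ⇑f₁ ⊆ Set.range ⇑g ∧ Set.range ⇑f₂ ⊆ Set.range ⇑g ∧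
          c f₁ ≠ c f₂) := by
  classical
  by_cases hsub : ∀ x y : M, x = y
  · refine Or.inl ⟨fun _ _ => False,
      { trichotomous := fun x y _ _ => hsub x y
        irrefl := fun _ h => h
        trans := fun _ _ _ h => h.elim }, fun _ _ _ h => h.elim⟩
  push_neg at hsub
  obtain ⟨x₀, y₀, hxy₀⟩ := hsub
  -- membership of closures of finite sets in K
  have hPmem : ∀ s : Set M, s.Finite →
      Bundled.mk ↥(Substructure.closure L s) ∈ K := fun s hs =>
    hM.age ▸ age.fg_substructure (Substructure.fg_closure hs)
  have hPcard : ∀ x y : M, x ≠ y →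
      Nat.card ↥(Substructure.closure L ({x, y} : Set M)) = 2 := by
    intro x y hxy
    rw [← SetLike.coe_sort_coe, Substructure.closure_eq_of_isRelational,
      Nat.card_coe_set_eq, Set.ncard_pair hxy]
  -- the canonical two-element structure
  set A₀ : Bundled L.Structure := Bundled.mk ↥(Substructure.closure L ({x₀, y₀} : Set M)) with hA₀
  have hA₀K : A₀ ∈ K := hPmem _ (Set.toFinite _)
  haveI : Finite A₀ := hfin A₀ hA₀K
  have hA₀2 : Nat.card A₀ = 2 := hPcard x₀ y₀ hxy₀
  obtain ⟨a₀, a₁, ha01, hunivA⟩ := Nat.card_eq_two_iff.mp hA₀2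
  have hall : ∀ a : A₀, a = a₀ ∨ a = a₁ := fun a => by
    have : a ∈ ({a₀, a₁} : Set A₀) := hunivA.symm ▸ Set.mem_univ a
    simpa using this
  have hrange : ∀ f : A₀ ↪[L] M, Set.range ⇑f = {f a₀, f a₁} := fun f => by
    rw [← Set.image_univ, ← hunivA, Set.image_insert_eq, Set.image_singleton]
  -- the tournament
  set T : M → M → Prop := fun x y => ∃ f : A₀ ↪[L] M, f a₀ = x ∧ f a₁ = y with hT
  have hirr : ∀ x : M, ¬ T x x := by
    rintro x ⟨f, h0, h1⟩
    exact ha01 (f.injective (h0.trans h1.symm))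
  have htot : ∀ x y : M, x ≠ y → T x y ∨ T y x := by
    intro x y hxy
    obtain ⟨e⟩ := h2iso A₀ hA₀K _ (hPmem {x, y} (Set.toFinite _)) hA₀2 (hPcard x y hxy)
    let f : A₀ ↪[L] M :=
      (Substructure.closure L ({x, y} : Set M)).subtype.comp e.toEmbedding
    have hf : ∀ a : A₀, f a ∈ ({x, y} : Set M) := fun a => by
      have : (e a : M) ∈ Substructure.closure L ({x, y} : Set M) := (e a).2
      rwa [Substructure.mem_closure_iff_of_isRelational] at this
    have hne : f a₀ ≠ f a₁ := fun h => ha01 (f.injective h)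
    rcases hf a₀ with h0 | h0
    · left
      refine ⟨f, h0, ?_⟩
      rcases hf a₁ with h1 | h1
      · exact absurd (h0.trans h1.symm) hne
      · exact h1
    · right
      refine ⟨f, h0, ?_⟩
      rcases hf a₁ with h1 | h1
      · exact h1
      · exact absurd (h0.trans h1.symm) hne
  have hasym : ∀ x y : M, T x y → T y x → False := by
    rintro x y ⟨f, hf0, hf1⟩ ⟨g, hg0, hg1⟩
    have hfg : f = g := by
      refine emb_eq_of_range_subset (hrigid A₀ hA₀K) f g fun a => ?_
      rcases hall a with rfl | rfl
      · exact ⟨a₁, hg1.trans hf0.symm⟩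
      · exact ⟨a₀, hg0.trans hf1.symm⟩
    apply hirr x
    have hxy : x = y := by rw [← hf0, ← hg0, hfg]
    exact ⟨f, hf0, by rw [hf1, ← hxy]⟩
  by_cases htrans : ∀ x y z : M, T x y → T y z → T x z
  · -- the tournament is transitive: it is an invariant linear order
    refine Or.inl ⟨T, ?_, ?_⟩
    · exact
        { trichotomous := fun x y hnxy hnyx => by
            by_cases h : x = y
            · exact h
            · exact ((htot x y h).elim hnxy hnyx).elim
          irrefl := hirr
          trans := htrans }
    · rintro g x y ⟨f, h0, h1⟩
      exact ⟨g.toEmbedding.comp f, by simp [h0], by simp [h1]⟩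
  · -- there is a 3-cycle
    push_neg at htrans
    obtain ⟨x, y, z, hxy, hyz, hnxz⟩ := htrans
    have hxny : x ≠ y := fun h => hirr y (h ▸ hxy)
    have hynz : y ≠ z := fun h => hirr z (h ▸ hyz)
    have hxnz : x ≠ z := fun h => hasym x y hxy (h ▸ hyz)
    have hzx : T z x := (htot x z hxnz).resolve_left hnxz
    set S : L.Substructure M := Substructure.closure L ({x, y, z} : Set M) with hS
    have hSset : (S : Set M) = {x, y, z} := Substructure.closure_eq_of_isRelational L _
    have hSK : Bundled.mk ↥S ∈ K := hPmem _ (Set.toFinite _)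
    have hS3 : Nat.card ↥S = 3 := by
      rw [← SetLike.coe_sort_coe, hSset, Nat.card_coe_set_eq,
        Set.ncard_insert_of_notMem (by simp [hxny, hxnz]) (Set.toFinite _),
        Set.ncard_pair hynz]
    have hmemS : ∀ m ∈ ({x, y, z} : Set M), m ∈ S := fun m hm => by
      rw [← SetLike.mem_coe, hSset]; exact hm
    -- restrict the three witnessing embeddings to S
    obtain ⟨fxy, hfxy0, hfxy1⟩ := hxy
    obtain ⟨fyz, hfyz0, hfyz1⟩ := hyz
    obtain ⟨fzx, hfzx0, hfzx1⟩ := hzx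
    have hresxy : ∀ a : A₀, fxy a ∈ S := fun a => by
      rcases hall a with rfl | rfl
      · rw [hfxy0]; exact hmemS x (by simp)
      · rw [hfxy1]; exact hmemS y (by simp)
    have hresyz : ∀ a : A₀, fyz a ∈ S := fun a => by
      rcases hall a with rfl | rfl
      · rw [hfyz0]; exact hmemS y (by simp)
      · rw [hfyz1]; exact hmemS z (by simp)
    have hreszx : ∀ a : A₀, fzx a ∈ S := fun a => by
      rcases hall a with rfl | rfl
      · rw [hfzx0]; exact hmemS z (by simp)
      · rw [hfzx1]; exact hmemS x (by simp)
    let exy : A₀ ↪[L] ↥S := FirstOrder.Language.Embedding.codRestrict S fxy hresxy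
    let eyz : A₀ ↪[L] ↥S := FirstOrder.Language.Embedding.codRestrict S fyz hresyz
    let ezx : A₀ ↪[L] ↥S := FirstOrder.Language.Embedding.codRestrict S fzx hreszx
    let xS : ↥S := ⟨x, hmemS x (by simp)⟩
    let yS : ↥S := ⟨y, hmemS y (by simp)⟩
    let zS : ↥S := ⟨z, hmemS z (by simp)⟩
    have hexy0 : exy a₀ = xS := Subtype.ext (by simpa [exy] using hfxy0)
    have hexy1 : exy a₁ = yS := Subtype.ext (by simpa [exy] using hfxy1)
    have heyz0 : eyz a₀ = yS := Subtype.ext (by simpa [eyz] using hfyz0)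
    have heyz1 : eyz a₁ = zS := Subtype.ext (by simpa [eyz] using hfyz1)
    have hezx0 : ezx a₀ = zS := Subtype.ext (by simpa [ezx] using hfzx0)
    have hezx1 : ezx a₁ = xS := Subtype.ext (by simpa [ezx] using hfzx1)
    have hxyS : xS ≠ yS := fun h => hxny (congrArg Subtype.val h)
    have hyzS : yS ≠ zS := fun h => hynz (congrArg Subtype.val h)
    have hxzS : xS ≠ zS := fun h => hxnz (congrArg Subtype.val h)
    refine Or.inr ⟨A₀, hA₀K, Bundled.mk ↥S, hSK, hA₀2, hS3, ?_⟩
    intro C hC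
    haveI : Finite C := hfin C hC
    obtain ⟨σ, hσ⟩ := exists_injective_nat C
    refine ⟨fun f => decide (σ (f a₀) < σ (f a₁)), ?_⟩
    intro g
    have hpq : σ (g xS) ≠ σ (g yS) := fun h => hxyS (g.injective (hσ h))
    have hqr : σ (g yS) ≠ σ (g zS) := fun h => hyzS (g.injective (hσ h))
    have hpr : σ (g xS) ≠ σ (g zS) := fun h => hxzS (g.injective (hσ h))
    have hsub : ∀ e : A₀ ↪[L] ↥S, Set.range ⇑(g.comp e) ⊆ Set.range ⇑g := by
      rintro e _ ⟨a, rfl⟩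
      exact ⟨e a, by simp⟩
    have key : ¬(σ (g xS) < σ (g yS) ↔ σ (g yS) < σ (g zS)) ∨
        ¬(σ (g yS) < σ (g zS) ↔ σ (g zS) < σ (g xS)) := by omega
    rcases key with hk | hk
    · refine ⟨g.comp exy, g.comp eyz, hsub exy, hsub eyz, ?_⟩
      simp only [Embedding.comp_apply, hexy0, hexy1, heyz0, heyz1]
      exact fun h => hk (decide_eq_decide.mp h)
    · refine ⟨g.comp eyz, g.comp ezx, hsub eyz, hsub ezx, ?_⟩
      simp only [Embedding.comp_apply, heyz0, heyz1, hezx0, hezx1]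
      exact fun h => hk (decide_eq_decide.mp h)
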